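/- Let q be a prime power, n = 2k, t even, s a nonnegative integer, β ∈ F_{q^k}, γ ∈ F_q with γ ≠ 0, and δ ∈ F_{q^n} with δ^{q^k} = −δ. Then f(x) = (x^{q^k} − x + δ)^t + β·Tr(x) + γ·x^{q^s} is a permutation polynomial of F_{q^n} if and only if Tr(β γ⁻¹) + 1 ≠ 0. -/

import Mathlib

theorem stmt_7 (p e : ℕ) [Fact p.Prime] (he : 0 < e) (q : ℕ) (hq : q = p ^ e)
    (F : Type) [Field F] [Fintype F] (k : ℕ) (hk : 0 < k) (n : ℕ) (hn : n = 2 * k)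
    (hF : Fintype.card F = q ^ n)
    (t : ℕ) (ht : Even t) (s : ℕ)
    (β : F) (hβ : β ^ q ^ k = β)
    (γ : F) (hγq : γ ^ q = γ) (hγ : γ ≠ 0)
    (δ : F) (hδ : δ ^ q ^ k = -δ)
    (Tr : F → F) (hTr : ∀ x, Tr x = ∑ i ∈ Finset.range n, x ^ q ^ i) :
    Function.Bijective
        (fun x : F => (x ^ q ^ k - x + δ) ^ t + β * Tr x + γ * x ^ q ^ s) ↔
      Tr (β * γ⁻¹) + 1 ≠ 0 := by
  have hp : p.Prime := Fact.out
  have hn0 : 0 < n := by omega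
  have hq0 : 0 < q := by rw [hq]; exact pow_pos hp.pos e
  have hqm0 : ∀ m : ℕ, q ^ m ≠ 0 := fun m => (pow_pos hq0 m).ne'
  -- the characteristic of F is p
  have hchar : CharP F p := by
    obtain ⟨r, hr⟩ := CharP.exists F
    haveI := hr
    have hrp : r.Prime := CharP.char_is_prime F r
    obtain ⟨m, -, hcard⟩ := FiniteField.card F r
    have hpd : p ∣ Fintype.card F := by
      rw [hF, hq, ← pow_mul]
      exact dvd_pow_self p (by positivity)
    rw [hcard] at hpd
    have : p = r :=
      (Nat.prime_dvd_prime_iff_eq hp hrp).mp (hp.dvd_of_dvd_pow hpd)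
    rwa [this]
  haveI := hchar
  -- freshman's dream for q-powers
  have hqm : ∀ m : ℕ, q ^ m = p ^ (e * m) := fun m => by rw [hq, ← pow_mul]
  have hadd : ∀ (m : ℕ) (x y : F), (x + y) ^ q ^ m = x ^ q ^ m + y ^ q ^ m := by
    intro m x y; rw [hqm m]; exact add_pow_char_pow x y p (e * m)
  have hsub : ∀ (m : ℕ) (x y : F), (x - y) ^ q ^ m = x ^ q ^ m - y ^ q ^ m := by
    intro m x y; rw [hqm m]; exact sub_pow_char_pow x y (e * m)
  have hqn : ∀ x : F, x ^ q ^ n = x := by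
    intro x; rw [← hF]; exact FiniteField.pow_card x
  have hqs0 : ∀ (m : ℕ) (x : F), x ^ q ^ m = 0 → x = 0 := by
    intro m x hx
    exact (pow_eq_zero_iff (hqm0 m)).mp hx
  have hqinj : ∀ (m : ℕ) (x y : F), x ^ q ^ m = y ^ q ^ m → x = y := by
    intro m x y h
    have h0 : (x - y) ^ q ^ m = 0 := by rw [hsub, h, sub_self]
    exact sub_eq_zero.mp (hqs0 m _ h0)
  -- elements fixed by x ↦ x^q are fixed by all q-power maps
  have hfix : ∀ (a : F), a ^ q = a → ∀ m : ℕ, a ^ q ^ m = a := by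
    intro a ha m
    induction m with
    | zero => simp
    | succ m ih => rw [pow_succ, pow_mul, ih, ha]
  -- properties of the trace
  have Trsub : ∀ x y : F, Tr (x - y) = Tr x - Tr y := by
    intro x y
    simp only [hTr, hsub, Finset.sum_sub_distrib]
  have Tr0 : Tr 0 = 0 := by
    simp only [hTr]
    have : ∀ i : ℕ, (0 : F) ^ q ^ i = 0 := fun i => zero_pow (hqm0 i)
    simp [this]
  have Trneg : ∀ x : F, Tr (-x) = -Tr x := by
    intro x
    have := Trsub 0 x
    simpa [Tr0] using this
  have Trmul : ∀ a x : F, a ^ q = a → Tr (a * x) = a * Tr x := by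
    intro a x ha
    simp only [hTr, mul_pow, Finset.mul_sum]
    exact Finset.sum_congr rfl fun i _ => by rw [hfix a ha i]
  have TrFrob : ∀ x : F, Tr (x ^ q) = Tr x := by
    intro x
    have h1 : ∀ i : ℕ, (x ^ q) ^ q ^ i = x ^ q ^ (i + 1) := by
      intro i; rw [← pow_mul, ← pow_succ']
    have h2 : ∑ i ∈ Finset.range (n + 1), x ^ q ^ i
        = (∑ i ∈ Finset.range n, x ^ q ^ (i + 1)) + x ^ q ^ 0 :=
      Finset.sum_range_succ' _ n
    rw [Finset.sum_range_succ] at h2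
    rw [hTr, hTr]
    simp only [h1]
    rw [hqn x, pow_zero, pow_one] at h2
    linear_combination -h2
  -- trace takes values in F_q
  have haddq : ∀ x y : F, (x + y) ^ q = x ^ q + y ^ q := by
    intro x y
    have := hadd 1 x y
    simpa using this
  have Trq : ∀ x : F, (Tr x) ^ q = Tr x := by
    intro x
    have hsumq : ∀ (S : Finset ℕ) (f : ℕ → F),
        (∑ i ∈ S, f i) ^ q = ∑ i ∈ S, (f i) ^ q := by
      intro S f
      induction S using Finset.induction with
      | empty => simp [zero_pow hq0.ne']
      | insert _ _ h ih => rw [Finset.sum_insert h, Finset.sum_insert h, haddq, ih]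
    have : (Tr x) ^ q = Tr (x ^ q) := by
      rw [hTr, hTr, hsumq]
      exact Finset.sum_congr rfl fun i _ => by
        rw [← pow_mul, mul_comm, pow_mul]
    rw [this, TrFrob]
  have Trpow : ∀ (m : ℕ) (x : F), Tr (x ^ q ^ m) = Tr x := by
    intro m x
    induction m with
    | zero => simp
    | succ m ih => rw [pow_succ, pow_mul, TrFrob, ih]
  -- key: the first summand is fixed by x ↦ x^{q^k}
  have hkk : ∀ x : F, (x ^ q ^ k) ^ q ^ k = x := by
    intro x
    rw [← pow_mul, ← pow_add]
    have : k + k = n := by omega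
    rw [this, hqn]
  have hphikey : ∀ x : F, ((x ^ q ^ k - x + δ) ^ t) ^ q ^ k = (x ^ q ^ k - x + δ) ^ t := by
    intro x
    have h1 : (x ^ q ^ k - x + δ) ^ q ^ k = -(x ^ q ^ k - x + δ) := by
      rw [hadd, hsub, hδ, hkk]
      ring
    rw [← pow_right_comm, h1, ht.neg_pow]
  -- Frobenius-twisted value of f
  have hfrob_f : ∀ x : F,
      ((x ^ q ^ k - x + δ) ^ t + β * Tr x + γ * x ^ q ^ s) ^ q ^ k
      = (x ^ q ^ k - x + δ) ^ t + β * Tr x + γ * (x ^ q ^ k) ^ q ^ s := by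
    intro x
    rw [hadd, hadd, hphikey, mul_pow, mul_pow, hβ, hfix (Tr x) (Trq x) k,
      hfix γ hγq k, ← pow_mul, ← pow_mul, mul_comm (q ^ s)]
  have hγγ : γ * γ⁻¹ = 1 := mul_inv_cancel₀ hγ
  constructor
  · -- bijective → condition
    intro hbij
    intro hc0
    have hcm1 : Tr (β * γ⁻¹) = -1 := by linear_combination hc0
    set c : F := -(β * γ⁻¹) with hc
    have hsurj : Function.Surjective (fun x : F => x ^ q ^ s) :=
      Finite.injective_iff_surjective.mp (fun a b hab => hqinj s a b hab)
    obtain ⟨d, hd⟩ := hsurj c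
    simp only at hd
    have hTrc : Tr c = 1 := by
      rw [hc, Trneg, hcm1]; ring
    have hTrd : Tr d = 1 := by
      rw [← Trpow s d, hd, hTrc]
    have hck : c ^ q ^ k = c := by
      have h0 : c = 0 - β * γ⁻¹ := by rw [hc]; ring
      rw [h0, hsub, mul_pow, hβ, inv_pow, hfix γ hγq k]
      simp [zero_pow (hqm0 k)]
    have hdk : d ^ q ^ k = d := by
      apply hqinj s
      rw [pow_right_comm, hd, hck]
    have hd0 : d ≠ 0 := by
      intro h
      rw [h, Tr0] at hTrd
      exact zero_ne_one hTrd
    have heq : (fun x : F => (x ^ q ^ k - x + δ) ^ t + β * Tr x + γ * x ^ q ^ s) d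
        = (fun x : F => (x ^ q ^ k - x + δ) ^ t + β * Tr x + γ * x ^ q ^ s) 0 := by
      simp only
      rw [hdk, hTrd, hd, Tr0, zero_pow (hqm0 k), zero_pow (hqm0 s), hc]
      linear_combination (-β) * hγγ
    exact hd0 (hbij.injective heq)
  · -- condition → bijective
    intro hcond
    rw [Fintype.bijective_iff_injective_and_card]
    refine ⟨?_, rfl⟩
    intro x y hxy
    simp only at hxy
    -- step 1 : x^{q^k} - x = y^{q^k} - y
    have h1 : γ * (x ^ q ^ k - x) ^ q ^ s = γ * (y ^ q ^ k - y) ^ q ^ s := by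
      have hx' := hfrob_f x
      have hy' := hfrob_f y
      rw [hxy] at hx'
      rw [hy'] at hx'
      rw [hsub s (x ^ q ^ k) x, hsub s (y ^ q ^ k) y]
      linear_combination -hx' - hxy
    have h2 : x ^ q ^ k - x = y ^ q ^ k - y :=
      hqinj s _ _ (mul_left_cancel₀ hγ h1)
    have hAB : (x ^ q ^ k - x + δ) ^ t = (y ^ q ^ k - y + δ) ^ t := by rw [h2]
    set d := x - y with hdd
    have h3 : β * Tr d + γ * d ^ q ^ s = 0 := by
      linear_combination hxy - hAB + β * Trsub x y + γ * hsub s x y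
    have hds2 : d ^ q ^ s = -(Tr d * (β * γ⁻¹)) := by
      apply mul_left_cancel₀ hγ
      linear_combination h3 + Tr d * β * hγγ
    have h4 : Tr d = -(Tr d * Tr (β * γ⁻¹)) := by
      conv_lhs => rw [← Trpow s d, hds2]
      rw [Trneg, Trmul _ _ (Trq d)]
    have h5 : Tr d * (Tr (β * γ⁻¹) + 1) = 0 := by linear_combination h4
    have h6 : Tr d = 0 := by
      rcases mul_eq_zero.mp h5 with h | h
      · exact h
      · exact absurd h hcond
    have h7 : d = 0 := by
      apply hqs0 s
      rw [hds2, h6]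
      ring
    exact sub_eq_zero.mp h7
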